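/- arXiv:1505.01047 — 3 statements merged into one kernel-verified Lean document; each statement's English description precedes it below -/
import Mathlib

section
/- Let m ∈ (1/2)ℤ_{>0} and s ∈ (1/2)ℤ. For every τ with Im τ > 0 and all z₁, z₂ ∈ ℂ with z₁ ∉ ℤ + ℤτ: (a) Φ^{±[m;s]}(τ, z₁, z₂) − e^{4πi m z₁} Φ^{±[m;s]}(τ, z₁, z₂ + 2τ) = Σ_{k ∈ ℤ, 0 ≤ k < 2m} e^{πi(k+s)(z₁−z₂)} q^{−(k+s)²/(4m)} Θ^{±}_{k+s, m}(τ, z₁ + z₂); and (b) Φ^{±[m;s]}(τ, z₁, z₂) − e^{−4πi m z₂} Φ^{±[m;s]}(τ, z₁ − 2τ, z₂) equals the same right-hand side. -/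
noncomputable section

open Complex

/-- `mexp w = e^{2πi w}`. -/
def mexp (w : ℂ) : ℂ := Complex.exp (2 * (Real.pi : ℂ) * Complex.I * w)

/-- The signed mock theta function `Φ^{sgn[m;s]}(τ,z₁,z₂)`. -/
def PhiS (sgn : ℂ) (m s : ℝ) (τ z₁ z₂ : ℂ) : ℂ :=
  ∑' n : ℤ, sgn ^ n *
    mexp ((m : ℂ) * n * (z₁ + z₂) + (s : ℂ) * z₁ + τ * ((m : ℂ) * n ^ 2 + (s : ℂ) * n)) /
    (1 - mexp (z₁ + n * τ))

/-- The signed theta function `Θ^{sgn}_{j,m}(τ,z)`. -/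
def ThetaS (sgn : ℂ) (j m : ℝ) (τ z : ℂ) : ℂ :=
  ∑' n : ℤ, sgn ^ n *
    mexp ((m : ℂ) * z * ((n : ℂ) + ((j / (2 * m) : ℝ) : ℂ)) +
      τ * (m : ℂ) * ((n : ℂ) + ((j / (2 * m) : ℝ) : ℂ)) ^ 2)

/-- `E(x) = 2∫₀ˣ e^{-πu²} du`. -/
def Efun (x : ℝ) : ℝ := 2 * ∫ u in (0:ℝ)..x, Real.exp (-Real.pi * u ^ 2)

/-- `ψ_{m,n}(τ,z) = (n - 2m Im z / Im τ) √(Im τ / m)`. -/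
def psiMN (m n : ℝ) (τ z : ℂ) : ℝ := (n - 2 * m * z.im / τ.im) * Real.sqrt (τ.im / m)

/-- The real-analytic correction `R^{sgn}_{j,m}(τ,z)`; the summation variable `n ∈ j + 2mℤ`
is written as `n = j + 2mk`, `k ∈ ℤ`, so that `(±1)^{(n-j)/(2m)} = sgn^k`. -/
def RS (sgn : ℂ) (j m : ℝ) (τ z : ℂ) : ℂ :=
  ∑' k : ℤ, sgn ^ k *
    (((Real.sign (j + 2 * m * k - 1 / 2 - j + 2 * m) -
        Efun (psiMN m (j + 2 * m * k) τ z) : ℝ)) : ℂ) *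
    Complex.exp (-(Real.pi : ℂ) * Complex.I * (((j + 2 * m * k : ℝ)) : ℂ) ^ 2 * τ / (2 * (m : ℂ))
      + 2 * (Real.pi : ℂ) * Complex.I * (((j + 2 * m * k : ℝ)) : ℂ) * z)

/-- The modifier `Φ^{sgn[m;s]}_add`; the summation variable `j ∈ s + ℤ`, `s ≤ j < s + 2m`
is written as `j = s + i`, `0 ≤ i < ⌈2m⌉`. -/
def PhiAddS (sgn : ℂ) (m s : ℝ) (τ z₁ z₂ : ℂ) : ℂ :=
  ∑ i ∈ Finset.range ⌈2 * m⌉₊,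
    RS sgn (s + i) m τ ((z₁ - z₂) / 2) * ThetaS sgn (s + i) m τ (z₁ + z₂)

/-- The modified (signed) mock theta function `Φ̃^{sgn[m;s]}`. -/
def PhiTilde (sgn : ℂ) (m s : ℝ) (τ z₁ z₂ : ℂ) : ℂ :=
  PhiS sgn m s τ z₁ z₂ - (1 / 2) * PhiAddS sgn m s τ z₁ z₂

end

noncomputable section

namespace S13

open Complex

lemma mexp_add (a b : ℂ) : mexp (a + b) = mexp a * mexp b := by
  rw [mexp, mexp, mexp, ← Complex.exp_add]; ring_nf

lemma mexp_pow (a : ℂ) (k : ℕ) : mexp a ^ k = mexp ((k : ℂ) * a) := by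
  rw [mexp, mexp, ← Complex.exp_nat_mul]; ring_nf

lemma norm_mexp (a : ℂ) : ‖mexp a‖ = Real.exp (-(2 * Real.pi * a.im)) := by
  rw [mexp, Complex.norm_exp]
  simp [Complex.mul_re, Complex.mul_im]

def Ee (m s : ℝ) (τ z₁ z₂ : ℂ) (n : ℤ) : ℂ :=
  (m : ℂ) * n * (z₁ + z₂) + (s : ℂ) * z₁ + τ * ((m : ℂ) * n ^ 2 + (s : ℂ) * n)

def Ff (sgn : ℂ) (m s : ℝ) (τ z₁ z₂ : ℂ) (n : ℤ) : ℂ :=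
  sgn ^ n * mexp (Ee m s τ z₁ z₂ n) / (1 - mexp (z₁ + n * τ))

def Gg (sgn : ℂ) (m s : ℝ) (τ z₁ z₂ : ℂ) (k : ℕ) (n : ℤ) : ℂ :=
  sgn ^ n * mexp (Ee m s τ z₁ z₂ n + (k : ℂ) * (z₁ + n * τ))

def Tt (sgn : ℂ) (j m : ℝ) (τ z : ℂ) (n : ℤ) : ℂ :=
  sgn ^ n * mexp ((m : ℂ) * z * ((n : ℂ) + ((j / (2 * m) : ℝ) : ℂ)) +
      τ * (m : ℂ) * ((n : ℂ) + ((j / (2 * m) : ℝ) : ℂ)) ^ 2)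

lemma PhiS_eq (sgn : ℂ) (m s : ℝ) (τ z₁ z₂ : ℂ) :
    PhiS sgn m s τ z₁ z₂ = ∑' n : ℤ, Ff sgn m s τ z₁ z₂ n := rfl

lemma ThetaS_eq (sgn : ℂ) (j m : ℝ) (τ z : ℂ) :
    ThetaS sgn j m τ z = ∑' n : ℤ, Tt sgn j m τ z n := rfl

lemma denom_ne {τ z₁ : ℂ} (hz : ∀ a b : ℤ, z₁ ≠ (a : ℂ) + (b : ℂ) * τ) (n : ℤ) :
    (1 : ℂ) - mexp (z₁ + n * τ) ≠ 0 := by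
  intro h
  have h1 : mexp (z₁ + n * τ) = 1 := (sub_eq_zero.mp h).symm
  rw [mexp, Complex.exp_eq_one_iff] at h1
  obtain ⟨k, hk⟩ := h1
  have h2 : (2 : ℂ) * (Real.pi : ℂ) * I ≠ 0 := by
    simp [Complex.I_ne_zero, Real.pi_ne_zero]
  have h3 : z₁ + n * τ = k := by
    apply mul_left_cancel₀ h2
    rw [hk]; ring
  exact hz k (-n) (by push_cast; linear_combination h3)

lemma summable_signed_jacobi {sgn : ℂ} (hsgn : sgn = 1 ∨ sgn = -1) (w : ℂ) {T : ℂ}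
    (hT : 0 < T.im) : Summable fun n : ℤ => sgn ^ n * jacobiTheta₂_term n w T := by
  rcases hsgn with h | h
  · simp only [h, one_zpow, one_mul]
    exact (summable_jacobiTheta₂_term_iff w T).mpr hT
  · refine ((summable_jacobiTheta₂_term_iff (w + 1/2) T).mpr hT).congr fun n => ?_
    rw [h, jacobiTheta₂_term, jacobiTheta₂_term,
      show ((-1 : ℂ)) ^ n = Complex.exp ((n : ℂ) * ((Real.pi : ℂ) * I)) by
        rw [Complex.exp_int_mul, Complex.exp_pi_mul_I],
      ← Complex.exp_add]
    congr 1
    ring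

lemma summable_num {sgn : ℂ} (hsgn : sgn = 1 ∨ sgn = -1) {m2 : ℤ} (hm2 : 0 < m2) {τ : ℂ}
    (hτ : 0 < τ.im) (α β : ℂ) :
    Summable fun n : ℤ => sgn ^ n * mexp ((n : ℂ) * α + τ * ((m2 : ℂ) / 2) * (n : ℂ) ^ 2 + β) := by
  have hT : 0 < ((m2 : ℂ) * τ).im := by
    have : ((m2 : ℂ) * τ).im = (m2 : ℝ) * τ.im := by simp [Complex.mul_im]
    rw [this]
    exact mul_pos (by exact_mod_cast hm2) hτ
  refine ((summable_signed_jacobi hsgn α hT).mul_left (mexp β)).congr fun n => ?_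
  rw [jacobiTheta₂_term, mexp, mexp,
    show ∀ a b c : ℂ, a * (c * b) = c * (a * b) from fun a b c => by ring, ← Complex.exp_add]
  congr 2
  ring

lemma summable_Gg {sgn : ℂ} (hsgn : sgn = 1 ∨ sgn = -1) {m2 : ℤ} (hm2 : 0 < m2) (s2 : ℤ)
    {τ : ℂ} (hτ : 0 < τ.im) (z₁ z₂ : ℂ) (k : ℕ) :
    Summable (Gg sgn ((m2 : ℝ) / 2) ((s2 : ℝ) / 2) τ z₁ z₂ k) := by
  refine (summable_num hsgn hm2 hτ
    ((m2 : ℂ) / 2 * (z₁ + z₂) + (s2 : ℂ) / 2 * τ + (k : ℂ) * τ)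
    ((s2 : ℂ) / 2 * z₁ + (k : ℂ) * z₁)).congr fun n => ?_
  unfold Gg Ee
  congr 2
  push_cast
  ring

lemma summable_Ff {sgn : ℂ} (hsgn : sgn = 1 ∨ sgn = -1) {m2 : ℤ} (hm2 : 0 < m2) (s2 : ℤ)
    {τ : ℂ} (hτ : 0 < τ.im) {z₁ : ℂ} (hz : ∀ a b : ℤ, z₁ ≠ (a : ℂ) + (b : ℂ) * τ) (z₂ : ℂ) :
    Summable (Ff sgn ((m2 : ℝ) / 2) ((s2 : ℝ) / 2) τ z₁ z₂) := by
  set C : ℝ := (|z₁.im| + 1) / τ.im with hC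
  have hnum : Summable fun n : ℤ =>
      2 * ‖sgn ^ n * mexp (Ee ((m2 : ℝ) / 2) ((s2 : ℝ) / 2) τ z₁ z₂ n)‖ := by
    refine Summable.mul_left 2 (Summable.norm ?_)
    refine (summable_num hsgn hm2 hτ
      ((m2 : ℂ) / 2 * (z₁ + z₂) + (s2 : ℂ) / 2 * τ) ((s2 : ℂ) / 2 * z₁)).congr fun n => ?_
    unfold Ee
    congr 2
    push_cast
    ring
  have hbound : ∀ n : ℤ, ¬ |(n : ℝ)| ≤ C →
      ‖Ff sgn ((m2 : ℝ) / 2) ((s2 : ℝ) / 2) τ z₁ z₂ n‖ ≤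
        2 * ‖sgn ^ n * mexp (Ee ((m2 : ℝ) / 2) ((s2 : ℝ) / 2) τ z₁ z₂ n)‖ := by
    intro n hn
    push_neg at hn
    have him : (z₁ + (n : ℂ) * τ).im = z₁.im + (n : ℝ) * τ.im := by
      simp [Complex.add_im, Complex.mul_im]
    have h1 : |z₁.im| + 1 < |(n : ℝ)| * τ.im := by
      rw [hC, div_lt_iff₀ hτ] at hn
      linarith [hn]
    have h2 : (1 : ℝ) < |z₁.im + (n : ℝ) * τ.im| := by
      have habs : |(n : ℝ) * τ.im| = |(n : ℝ)| * τ.im := by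
        rw [abs_mul, abs_of_pos hτ]
      calc (1 : ℝ) < |(n : ℝ) * τ.im| - |z₁.im| := by rw [habs]; linarith
        _ ≤ |z₁.im + (n : ℝ) * τ.im| := by
            have h5 := abs_sub_abs_le_abs_sub ((n : ℝ) * τ.im) (-z₁.im)
            simp only [abs_neg, sub_neg_eq_add] at h5
            rw [add_comm]
            linarith
    have hXnorm : ‖mexp (z₁ + (n : ℂ) * τ)‖ =
        Real.exp (-(2 * Real.pi * (z₁.im + (n : ℝ) * τ.im))) := by
      rw [norm_mexp, him]
    have hden : (1 : ℝ) / 2 ≤ ‖(1 : ℂ) - mexp (z₁ + (n : ℂ) * τ)‖ := by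
      set u : ℝ := z₁.im + (n : ℝ) * τ.im with hu
      have he2 : (2 : ℝ) ≤ Real.exp 1 := by
        have := Real.add_one_le_exp 1
        linarith
      rcases abs_cases u with ⟨h3, h4⟩ | ⟨h3, h4⟩
      · have hu1 : (1 : ℝ) < u := by rw [h3] at h2; exact h2
        have hsmall : ‖mexp (z₁ + (n : ℂ) * τ)‖ ≤ 1 / 2 := by
          rw [hXnorm]
          have hmono : Real.exp (-(2 * Real.pi * u)) ≤ Real.exp (-1) := by
            apply Real.exp_le_exp.mpr
            nlinarith [Real.pi_gt_three]
          refine hmono.trans ?_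
          rw [Real.exp_neg, inv_le_comm₀ (Real.exp_pos 1) (by norm_num)]
          linarith
        have htr := norm_sub_norm_le (1 : ℂ) (mexp (z₁ + (n : ℂ) * τ))
        simp only [norm_one] at htr
        linarith
      · have hu1 : u < -1 := by rw [h3] at h2; linarith
        have hbig : (2 : ℝ) ≤ ‖mexp (z₁ + (n : ℂ) * τ)‖ := by
          rw [hXnorm]
          calc (2 : ℝ) ≤ Real.exp 1 := he2
            _ ≤ Real.exp (-(2 * Real.pi * u)) := by
                apply Real.exp_le_exp.mpr
                nlinarith [Real.pi_gt_three]
        have htr := norm_sub_norm_le (mexp (z₁ + (n : ℂ) * τ)) (1 : ℂ)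
        simp only [norm_one] at htr
        have h5 : ‖(1 : ℂ) - mexp (z₁ + (n : ℂ) * τ)‖ =
            ‖mexp (z₁ + (n : ℂ) * τ) - 1‖ := by rw [norm_sub_rev]
        linarith
    rw [Ff, norm_div, div_le_iff₀ (lt_of_lt_of_le (by norm_num) hden)]
    have hnn : (0 : ℝ) ≤ ‖sgn ^ n * mexp (Ee ((m2 : ℝ) / 2) ((s2 : ℝ) / 2) τ z₁ z₂ n)‖ :=
      norm_nonneg _
    nlinarith [hden, hnn]
  have hfin : {n : ℤ | |(n : ℝ)| ≤ C}.Finite := by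
    refine (Set.finite_Icc (-(⌈C⌉₊ : ℤ)) (⌈C⌉₊ : ℤ)).subset ?_
    intro n hn
    simp only [Set.mem_setOf_eq] at hn
    have h1 : |(n : ℝ)| ≤ (⌈C⌉₊ : ℝ) := hn.trans (Nat.le_ceil C)
    have h2 := abs_le.mp h1
    constructor
    · exact_mod_cast h2.1
    · exact_mod_cast h2.2
  refine Summable.of_norm_bounded_eventually hnum ?_
  refine Filter.eventually_cofinite.mpr (hfin.subset ?_)
  intro n hn
  simp only [Set.mem_setOf_eq] at hn ⊢
  by_contra h
  exact hn (hbound n h)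

lemma key_pointwise {sgn : ℂ} {m2 : ℤ} (hm2 : 0 < m2) (s2 : ℤ) {τ z₁ : ℂ}
    (hz : ∀ a b : ℤ, z₁ ≠ (a : ℂ) + (b : ℂ) * τ) (z₂ : ℂ) (n : ℤ) :
    Ff sgn ((m2 : ℝ) / 2) ((s2 : ℝ) / 2) τ z₁ z₂ n =
      mexp (2 * ((m2 : ℂ) / 2) * z₁) *
        Ff sgn ((m2 : ℝ) / 2) ((s2 : ℝ) / 2) τ z₁ (z₂ + 2 * τ) n +
      ∑ k ∈ Finset.range m2.toNat, Gg sgn ((m2 : ℝ) / 2) ((s2 : ℝ) / 2) τ z₁ z₂ k n := by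
  have hden := denom_ne hz n
  have hX1 : mexp (z₁ + n * τ) ≠ 1 := fun h => hden (by rw [h]; ring)
  have hX1' : mexp (z₁ + n * τ) - 1 ≠ 0 := sub_ne_zero.mpr hX1
  have hMc : ((m2.toNat : ℕ) : ℂ) = (m2 : ℂ) := by
    rw [← Int.cast_natCast, Int.toNat_of_nonneg hm2.le]
  have hnum : mexp (2 * ((m2 : ℂ) / 2) * z₁) *
      mexp (Ee ((m2 : ℝ) / 2) ((s2 : ℝ) / 2) τ z₁ (z₂ + 2 * τ) n) =
      mexp (Ee ((m2 : ℝ) / 2) ((s2 : ℝ) / 2) τ z₁ z₂ n) * mexp (z₁ + n * τ) ^ m2.toNat := by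
    rw [mexp_pow, ← mexp_add, ← mexp_add, hMc]
    congr 1
    unfold Ee
    push_cast
    ring
  have hgeom : ∑ k ∈ Finset.range m2.toNat, Gg sgn ((m2 : ℝ) / 2) ((s2 : ℝ) / 2) τ z₁ z₂ k n =
      sgn ^ n * mexp (Ee ((m2 : ℝ) / 2) ((s2 : ℝ) / 2) τ z₁ z₂ n) *
        ((mexp (z₁ + n * τ) ^ m2.toNat - 1) / (mexp (z₁ + n * τ) - 1)) := by
    rw [← geom_sum_eq hX1, Finset.mul_sum]
    refine Finset.sum_congr rfl fun k _ => ?_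
    rw [Gg, mexp_add, ← mexp_pow]
    ring
  have h2 : mexp (2 * ((m2 : ℂ) / 2) * z₁) *
      Ff sgn ((m2 : ℝ) / 2) ((s2 : ℝ) / 2) τ z₁ (z₂ + 2 * τ) n =
      sgn ^ n * mexp (Ee ((m2 : ℝ) / 2) ((s2 : ℝ) / 2) τ z₁ z₂ n) *
        mexp (z₁ + n * τ) ^ m2.toNat / (1 - mexp (z₁ + n * τ)) := by
    rw [Ff, mul_div_assoc']
    congr 1
    calc mexp (2 * ((m2 : ℂ) / 2) * z₁) *
        (sgn ^ n * mexp (Ee ((m2 : ℝ) / 2) ((s2 : ℝ) / 2) τ z₁ (z₂ + 2 * τ) n)) =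
        sgn ^ n * (mexp (2 * ((m2 : ℂ) / 2) * z₁) *
          mexp (Ee ((m2 : ℝ) / 2) ((s2 : ℝ) / 2) τ z₁ (z₂ + 2 * τ) n)) := by ring
      _ = sgn ^ n * (mexp (Ee ((m2 : ℝ) / 2) ((s2 : ℝ) / 2) τ z₁ z₂ n) *
          mexp (z₁ + n * τ) ^ m2.toNat) := by rw [hnum]
      _ = sgn ^ n * mexp (Ee ((m2 : ℝ) / 2) ((s2 : ℝ) / 2) τ z₁ z₂ n) *
          mexp (z₁ + n * τ) ^ m2.toNat := by ring
  rw [h2, hgeom, Ff]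
  field_simp
  ring

lemma Gg_eq_theta {sgn : ℂ} {m2 : ℤ} (hm2 : 0 < m2) (s2 : ℤ) (τ z₁ z₂ : ℂ) (k : ℕ) (n : ℤ) :
    Gg sgn ((m2 : ℝ) / 2) ((s2 : ℝ) / 2) τ z₁ z₂ k n =
      Complex.exp ((Real.pi : ℂ) * Complex.I * ((k : ℂ) + (s2 : ℂ) / 2) * (z₁ - z₂)) *
        mexp (τ * (-(((k : ℂ) + (s2 : ℂ) / 2) ^ 2 / (4 * ((m2 : ℂ) / 2))))) *
        Tt sgn ((k : ℝ) + (s2 : ℝ) / 2) ((m2 : ℝ) / 2) τ (z₁ + z₂) n := by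
  have hm2C : (m2 : ℂ) ≠ 0 := Int.cast_ne_zero.mpr hm2.ne'
  rw [Gg, Tt, mexp, mexp, mexp,
    show ∀ (P Q R : ℂ) (g : ℂ), Complex.exp P * Complex.exp Q * (g * Complex.exp R) =
      g * Complex.exp (P + Q + R) from fun P Q R g => by
        rw [Complex.exp_add, Complex.exp_add]; ring]
  have h4 : ((m2 : ℂ)) ^ 4 * (((m2 : ℂ))⁻¹) ^ 4 = 1 := by
    rw [← mul_pow, mul_inv_cancel₀ hm2C, one_pow]
  congr 2
  unfold Ee
  push_cast
  field_simp
  ring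

lemma shift_pointwise {sgn : ℂ} (hsgn : sgn = 1 ∨ sgn = -1) (m2 s2 : ℤ) (τ z₁ z₂ : ℂ) (n : ℤ) :
    mexp (-(2 * ((m2 : ℂ) / 2)) * z₂) *
      Ff sgn ((m2 : ℝ) / 2) ((s2 : ℝ) / 2) τ (z₁ - 2 * τ) z₂ (n + 2) =
    mexp (2 * ((m2 : ℂ) / 2) * z₁) *
      Ff sgn ((m2 : ℝ) / 2) ((s2 : ℝ) / 2) τ z₁ (z₂ + 2 * τ) n := by
  have hsgn0 : sgn ≠ 0 := by rcases hsgn with h | h <;> simp [h]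
  have hsq : sgn ^ (2 : ℤ) = 1 := by rcases hsgn with h | h <;> norm_num [h]
  have hpow : sgn ^ (n + 2) = sgn ^ n := by rw [zpow_add₀ hsgn0, hsq, mul_one]
  have hdenarg : (z₁ - 2 * τ) + ((n + 2 : ℤ) : ℂ) * τ = z₁ + (n : ℂ) * τ := by push_cast; ring
  have e1 : ∀ (a b g : ℂ), mexp a * (g * mexp b) = g * mexp (a + b) := by
    intro a b g; rw [mexp_add]; ring
  have hnum : mexp (-(2 * ((m2 : ℂ) / 2)) * z₂) *
      (sgn ^ n * mexp (Ee ((m2 : ℝ) / 2) ((s2 : ℝ) / 2) τ (z₁ - 2 * τ) z₂ (n + 2))) =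
      mexp (2 * ((m2 : ℂ) / 2) * z₁) *
      (sgn ^ n * mexp (Ee ((m2 : ℝ) / 2) ((s2 : ℝ) / 2) τ z₁ (z₂ + 2 * τ) n)) := by
    rw [e1, e1]
    congr 2
    unfold Ee
    push_cast
    ring
  rw [Ff, Ff, hpow, hdenarg]
  linear_combination (1 - mexp (z₁ + (n : ℂ) * τ))⁻¹ * hnum

end S13

end

/-- the two difference equations for `Φ^{±[m;s]}`,
`m = m2/2 ∈ (1/2)ℤ_{>0}`, `s = s2/2 ∈ (1/2)ℤ`.  The sum over `k ∈ ℤ, 0 ≤ k < 2m`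
is a sum over `k ∈ Finset.range m2.toNat`, and `q^x = mexp (τ * x)`. -/
theorem stmt13 (m2 : ℤ) (hm2 : 0 < m2) (s2 : ℤ) (sgn : ℂ) (hsgn : sgn = 1 ∨ sgn = -1)
    (τ z₁ z₂ : ℂ) (hτ : 0 < τ.im) (hz : ∀ a b : ℤ, z₁ ≠ (a : ℂ) + (b : ℂ) * τ) :
    (PhiS sgn ((m2 : ℝ) / 2) ((s2 : ℝ) / 2) τ z₁ z₂ -
        mexp (2 * ((m2 : ℂ) / 2) * z₁) * PhiS sgn ((m2 : ℝ) / 2) ((s2 : ℝ) / 2) τ z₁ (z₂ + 2 * τ) =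
      ∑ k ∈ Finset.range m2.toNat,
        Complex.exp ((Real.pi : ℂ) * Complex.I * ((k : ℂ) + (s2 : ℂ) / 2) * (z₁ - z₂)) *
          mexp (τ * (-(((k : ℂ) + (s2 : ℂ) / 2) ^ 2 / (4 * ((m2 : ℂ) / 2))))) *
          ThetaS sgn ((k : ℝ) + (s2 : ℝ) / 2) ((m2 : ℝ) / 2) τ (z₁ + z₂)) ∧
    (PhiS sgn ((m2 : ℝ) / 2) ((s2 : ℝ) / 2) τ z₁ z₂ -
        mexp (-(2 * ((m2 : ℂ) / 2)) * z₂) * PhiS sgn ((m2 : ℝ) / 2) ((s2 : ℝ) / 2) τ (z₁ - 2 * τ) z₂ =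
      ∑ k ∈ Finset.range m2.toNat,
        Complex.exp ((Real.pi : ℂ) * Complex.I * ((k : ℂ) + (s2 : ℂ) / 2) * (z₁ - z₂)) *
          mexp (τ * (-(((k : ℂ) + (s2 : ℂ) / 2) ^ 2 / (4 * ((m2 : ℂ) / 2))))) *
          ThetaS sgn ((k : ℝ) + (s2 : ℝ) / 2) ((m2 : ℝ) / 2) τ (z₁ + z₂)) := by
  have hFf2 : Summable (S13.Ff sgn ((m2 : ℝ) / 2) ((s2 : ℝ) / 2) τ z₁ (z₂ + 2 * τ)) :=
    S13.summable_Ff hsgn hm2 s2 hτ hz (z₂ + 2 * τ)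
  have hFf2' : Summable (fun n : ℤ => mexp (2 * ((m2 : ℂ) / 2) * z₁) *
      S13.Ff sgn ((m2 : ℝ) / 2) ((s2 : ℝ) / 2) τ z₁ (z₂ + 2 * τ) n) :=
    hFf2.mul_left _
  have hGg : ∀ k ∈ Finset.range m2.toNat,
      Summable (S13.Gg sgn ((m2 : ℝ) / 2) ((s2 : ℝ) / 2) τ z₁ z₂ k) :=
    fun k _ => S13.summable_Gg hsgn hm2 s2 hτ z₁ z₂ k
  have hGs : Summable (fun n : ℤ => ∑ k ∈ Finset.range m2.toNat,
      S13.Gg sgn ((m2 : ℝ) / 2) ((s2 : ℝ) / 2) τ z₁ z₂ k n) :=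
    (hasSum_sum fun k hk => (hGg k hk).hasSum).summable
  have hA : PhiS sgn ((m2 : ℝ) / 2) ((s2 : ℝ) / 2) τ z₁ z₂ -
        mexp (2 * ((m2 : ℂ) / 2) * z₁) * PhiS sgn ((m2 : ℝ) / 2) ((s2 : ℝ) / 2) τ z₁ (z₂ + 2 * τ) =
      ∑ k ∈ Finset.range m2.toNat,
        Complex.exp ((Real.pi : ℂ) * Complex.I * ((k : ℂ) + (s2 : ℂ) / 2) * (z₁ - z₂)) *
          mexp (τ * (-(((k : ℂ) + (s2 : ℂ) / 2) ^ 2 / (4 * ((m2 : ℂ) / 2))))) *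
          ThetaS sgn ((k : ℝ) + (s2 : ℝ) / 2) ((m2 : ℝ) / 2) τ (z₁ + z₂) := by
    have e1 : PhiS sgn ((m2 : ℝ) / 2) ((s2 : ℝ) / 2) τ z₁ z₂ =
        mexp (2 * ((m2 : ℂ) / 2) * z₁) *
          PhiS sgn ((m2 : ℝ) / 2) ((s2 : ℝ) / 2) τ z₁ (z₂ + 2 * τ) +
        ∑ k ∈ Finset.range m2.toNat,
          ∑' n : ℤ, S13.Gg sgn ((m2 : ℝ) / 2) ((s2 : ℝ) / 2) τ z₁ z₂ k n := by
      rw [S13.PhiS_eq sgn ((m2 : ℝ) / 2) ((s2 : ℝ) / 2) τ z₁ z₂,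
        S13.PhiS_eq sgn ((m2 : ℝ) / 2) ((s2 : ℝ) / 2) τ z₁ (z₂ + 2 * τ),
        show (∑' n : ℤ, S13.Ff sgn ((m2 : ℝ) / 2) ((s2 : ℝ) / 2) τ z₁ z₂ n) =
          ∑' n : ℤ, (mexp (2 * ((m2 : ℂ) / 2) * z₁) *
              S13.Ff sgn ((m2 : ℝ) / 2) ((s2 : ℝ) / 2) τ z₁ (z₂ + 2 * τ) n +
            ∑ k ∈ Finset.range m2.toNat, S13.Gg sgn ((m2 : ℝ) / 2) ((s2 : ℝ) / 2) τ z₁ z₂ k n)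
          from tsum_congr (S13.key_pointwise hm2 s2 hz z₂),
        Summable.tsum_add hFf2' hGs, tsum_mul_left, Summable.tsum_finsetSum hGg]
    rw [e1, add_sub_cancel_left]
    refine Finset.sum_congr rfl fun k hk => ?_
    rw [tsum_congr (fun n => S13.Gg_eq_theta hm2 s2 τ z₁ z₂ k n), tsum_mul_left,
      ← S13.ThetaS_eq]
  refine ⟨hA, ?_⟩
  have hB : mexp (-(2 * ((m2 : ℂ) / 2)) * z₂) *
        PhiS sgn ((m2 : ℝ) / 2) ((s2 : ℝ) / 2) τ (z₁ - 2 * τ) z₂ =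
      mexp (2 * ((m2 : ℂ) / 2) * z₁) *
        PhiS sgn ((m2 : ℝ) / 2) ((s2 : ℝ) / 2) τ z₁ (z₂ + 2 * τ) := by
    rw [S13.PhiS_eq sgn ((m2 : ℝ) / 2) ((s2 : ℝ) / 2) τ (z₁ - 2 * τ) z₂,
      S13.PhiS_eq sgn ((m2 : ℝ) / 2) ((s2 : ℝ) / 2) τ z₁ (z₂ + 2 * τ),
      ← tsum_mul_left, ← tsum_mul_left]
    calc (∑' n : ℤ, mexp (-(2 * ((m2 : ℂ) / 2)) * z₂) *
            S13.Ff sgn ((m2 : ℝ) / 2) ((s2 : ℝ) / 2) τ (z₁ - 2 * τ) z₂ n)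
        = ∑' n : ℤ, mexp (-(2 * ((m2 : ℂ) / 2)) * z₂) *
            S13.Ff sgn ((m2 : ℝ) / 2) ((s2 : ℝ) / 2) τ (z₁ - 2 * τ) z₂ (n + 2) :=
          ((Equiv.addRight (2 : ℤ)).tsum_eq fun n => mexp (-(2 * ((m2 : ℂ) / 2)) * z₂) *
            S13.Ff sgn ((m2 : ℝ) / 2) ((s2 : ℝ) / 2) τ (z₁ - 2 * τ) z₂ n).symm
      _ = _ := tsum_congr fun n => S13.shift_pointwise hsgn m2 s2 τ z₁ z₂ n
  rw [hB]
  exact hA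
end

section
/- Let m ∈ (1/2)ℤ_{>0} and j ∈ (1/2)ℤ. For every τ with Im τ > 0 and every v ∈ ℂ: (a) R^{±}_{j,m}(τ, v + 1) = (−1)^{2j} R^{±}_{j,m}(τ, v); (b) R^{±}_{j,m}(τ, v) ∓ e^{2πi m (2v − τ)} R^{±}_{j,m}(τ, v − τ) = 2 q^{−j²/(4m)} e^{2πi j v}; (c) R^{±}_{j,m}(τ, v) − e^{8πi m (v − τ)} R^{±}_{j,m}(τ, v − 2τ) = 2 ( q^{−j²/(4m)} e^{2πi j v} ± q^{−(j+2m)²/(4m)} e^{2πi (j+2m) v} ). -/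
section EfunLemmas
open MeasureTheory Set Real

lemma gauss_integrable : Integrable (fun u : ℝ => Real.exp (-Real.pi * u ^ 2)) :=
  integrable_exp_neg_mul_sq Real.pi_pos

lemma gauss_Ioi_zero : ∫ u in Set.Ioi (0:ℝ), Real.exp (-Real.pi * u ^ 2) = 1 / 2 := by
  have h := integral_gaussian_Ioi Real.pi
  rw [div_self Real.pi_ne_zero, Real.sqrt_one] at h
  simpa using h

lemma Efun_neg (x : ℝ) : Efun (-x) = - Efun x := by
  unfold Efun
  have h1 : (∫ u in (0:ℝ)..(-x), Real.exp (-Real.pi * u ^ 2))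
      = ∫ u in (0:ℝ)..(-x), Real.exp (-Real.pi * (-u) ^ 2) := by
    simp
  rw [h1, intervalIntegral.integral_comp_neg (fun u => Real.exp (-Real.pi * u ^ 2))]
  rw [neg_neg, neg_zero, intervalIntegral.integral_symm]
  ring

lemma Efun_tail (t : ℝ) (ht : 0 ≤ t) :
    Efun t = 1 - 2 * ∫ u in Set.Ioi t, Real.exp (-Real.pi * u ^ 2) := by
  have hsplit : (∫ u in Set.Ioi (0:ℝ), Real.exp (-Real.pi * u ^ 2))
      = (∫ u in Set.Ioc (0:ℝ) t, Real.exp (-Real.pi * u ^ 2))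
        + ∫ u in Set.Ioi t, Real.exp (-Real.pi * u ^ 2) := by
    rw [← MeasureTheory.setIntegral_union (Set.Ioc_disjoint_Ioi le_rfl) measurableSet_Ioi
      gauss_integrable.integrableOn gauss_integrable.integrableOn,
      Set.Ioc_union_Ioi_eq_Ioi ht]
  have h0 : (∫ u in (0:ℝ)..t, Real.exp (-Real.pi * u ^ 2))
      = ∫ u in Set.Ioc (0:ℝ) t, Real.exp (-Real.pi * u ^ 2) :=
    intervalIntegral.integral_of_le ht
  unfold Efun
  rw [h0]
  rw [gauss_Ioi_zero] at hsplit
  linarith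

lemma gauss_tail_le (t : ℝ) (ht : 0 ≤ t) :
    (∫ u in Set.Ioi t, Real.exp (-Real.pi * u ^ 2)) ≤ Real.exp (-Real.pi * t ^ 2) / 2 := by
  have hmp := measurePreserving_add_right (volume : Measure ℝ) t
  have hme : MeasurableEmbedding (· + t) :=
    (MeasurableEquiv.addRight t).measurableEmbedding
  have hpre : (· + t) ⁻¹' Set.Ioi t = Set.Ioi (0:ℝ) := by
    ext u; simp
  have h1 : (∫ u in Set.Ioi t, Real.exp (-Real.pi * u ^ 2))
      = ∫ u in Set.Ioi (0:ℝ), Real.exp (-Real.pi * (u + t) ^ 2) := by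
    rw [← hmp.setIntegral_preimage_emb hme (fun u => Real.exp (-Real.pi * u ^ 2)) (Set.Ioi t),
      hpre]
  rw [h1]
  have h2 : (∫ u in Set.Ioi (0:ℝ), Real.exp (-Real.pi * (u + t) ^ 2))
      ≤ ∫ u in Set.Ioi (0:ℝ), Real.exp (-Real.pi * t ^ 2) * Real.exp (-Real.pi * u ^ 2) := by
    apply MeasureTheory.setIntegral_mono_on
    · exact (gauss_integrable.comp_add_right t).integrableOn
    · exact (gauss_integrable.const_mul _).integrableOn
    · exact measurableSet_Ioi
    · intro u hu
      rw [← Real.exp_add]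
      apply Real.exp_le_exp.2
      have : (0:ℝ) ≤ u := le_of_lt hu
      nlinarith [mul_nonneg (mul_nonneg Real.pi_pos.le ht) this]
  rw [MeasureTheory.integral_const_mul, gauss_Ioi_zero] at h2
  linarith

lemma gauss_tail_nonneg (t : ℝ) :
    0 ≤ ∫ u in Set.Ioi t, Real.exp (-Real.pi * u ^ 2) :=
  MeasureTheory.setIntegral_nonneg measurableSet_Ioi (fun u _ => (Real.exp_pos _).le)

lemma Efun_close (t : ℝ) (ht : 0 ≤ t) :
    |1 - Efun t| ≤ Real.exp (-Real.pi * t ^ 2) := by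
  rw [Efun_tail t ht]
  have h1 := gauss_tail_le t ht
  have h2 := gauss_tail_nonneg t
  rw [abs_of_nonneg (by linarith)]
  linarith

end EfunLemmas
noncomputable section RTerm
open Complex Real

/-- The summand of `RS`. -/
def rterm (sgn : ℂ) (j m : ℝ) (τ z : ℂ) (k : ℤ) : ℂ :=
  sgn ^ k *
    (((Real.sign (j + 2 * m * k - 1 / 2 - j + 2 * m) -
        Efun (psiMN m (j + 2 * m * k) τ z) : ℝ)) : ℂ) *
    Complex.exp (-(Real.pi : ℂ) * Complex.I * (((j + 2 * m * k : ℝ)) : ℂ) ^ 2 * τ / (2 * (m : ℂ))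
      + 2 * (Real.pi : ℂ) * Complex.I * (((j + 2 * m * k : ℝ)) : ℂ) * z)

lemma RS_eq (sgn : ℂ) (j m : ℝ) (τ z : ℂ) : RS sgn j m τ z = ∑' k : ℤ, rterm sgn j m τ z k := rfl

variable {sgn : ℂ} {j m : ℝ} {τ z : ℂ}

lemma norm_sgn_zpow (hsgn : sgn = 1 ∨ sgn = -1) (k : ℤ) : ‖sgn ^ k‖ = 1 := by
  rcases hsgn with h | h <;> subst h <;> simp [norm_zpow]

lemma exp_re_eq (hm : 0 < m) (k : ℤ) :
    (-(Real.pi : ℂ) * Complex.I * (((j + 2 * m * k : ℝ)) : ℂ) ^ 2 * τ / (2 * (m : ℂ))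
      + 2 * (Real.pi : ℂ) * Complex.I * (((j + 2 * m * k : ℝ)) : ℂ) * z).re
    = Real.pi * (j + 2 * m * k) ^ 2 * τ.im / (2 * m) - 2 * Real.pi * (j + 2 * m * k) * z.im := by
  set n : ℝ := j + 2 * m * (k : ℝ) with hn
  have hm' : (m : ℂ) ≠ 0 := Complex.ofReal_ne_zero.mpr hm.ne'
  have hw : (-(Real.pi : ℂ) * Complex.I * ((n : ℝ) : ℂ) ^ 2 * τ / (2 * (m : ℂ))
      + 2 * (Real.pi : ℂ) * Complex.I * ((n : ℝ) : ℂ) * z)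
      = Complex.I * ((((-(Real.pi * n ^ 2 / (2 * m))) : ℝ) : ℂ) * τ
        + (((2 * Real.pi * n) : ℝ) : ℂ) * z) := by
    push_cast
    field_simp
  rw [hw]
  simp only [Complex.mul_re, Complex.mul_im, Complex.add_re, Complex.add_im, Complex.I_re,
    Complex.I_im, Complex.ofReal_re, Complex.ofReal_im]
  field_simp
  ring

lemma norm_rterm (hsgn : sgn = 1 ∨ sgn = -1) (hm : 0 < m) (k : ℤ) :
    ‖rterm sgn j m τ z k‖ =
      |Real.sign (j + 2 * m * k - 1 / 2 - j + 2 * m) - Efun (psiMN m (j + 2 * m * k) τ z)| *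
        Real.exp (Real.pi * (j + 2 * m * k) ^ 2 * τ.im / (2 * m)
          - 2 * Real.pi * (j + 2 * m * k) * z.im) := by
  unfold rterm
  rw [norm_mul, norm_mul, norm_sgn_zpow hsgn, one_mul,
    Complex.norm_exp, exp_re_eq hm, Complex.norm_real]
  rfl

end RTerm
noncomputable section Summability
open Complex Real

lemma summable_exp_quadratic (a b c : ℝ) (ha : 0 < a) :
    Summable (fun n : ℕ => Real.exp (-a * n ^ 2 + b * n + c)) := by
  have hr1 : Real.exp (-1) < 1 := Real.exp_lt_one_iff.mpr (by norm_num)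
  refine Summable.of_nonneg_of_le (fun n => (Real.exp_pos _).le) (fun n => ?_)
    ((summable_geometric_of_lt_one (Real.exp_pos _).le hr1).mul_left
      (Real.exp ((b + 1) ^ 2 / (4 * a) + c)))
  rw [← Real.exp_nat_mul, ← Real.exp_add]
  apply Real.exp_le_exp.2
  have h : 0 ≤ (2 * a * n - (b + 1)) ^ 2 / (4 * a) := by positivity
  have hexp : (b + 1) ^ 2 / (4 * a) + (n : ℝ) * (-1) - (-a * n ^ 2 + b * n + c - c)
      = (2 * a * n - (b + 1)) ^ 2 / (4 * a) := by
    field_simp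
    ring
  nlinarith [h]

variable {sgn : ℂ} {j m : ℝ} {τ z : ℂ}

lemma norm_rterm_le (hsgn : sgn = 1 ∨ sgn = -1) (hm : 0 < m) (hτ : 0 < τ.im) (k : ℤ)
    (hE : |Real.sign (j + 2 * m * k - 1 / 2 - j + 2 * m) - Efun (psiMN m (j + 2 * m * k) τ z)|
      ≤ Real.exp (-Real.pi * (psiMN m (j + 2 * m * k) τ z) ^ 2)) :
    ‖rterm sgn j m τ z k‖ ≤
      Real.exp (-(2 * Real.pi * m * τ.im) * (k : ℝ) ^ 2
        + (4 * Real.pi * m * z.im - 2 * Real.pi * τ.im * j) * (k : ℝ)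
        + (-Real.pi * τ.im * j ^ 2 / (2 * m) + 2 * Real.pi * z.im * j
            - 4 * Real.pi * m * z.im ^ 2 / τ.im)) := by
  rw [norm_rterm hsgn hm]
  calc _ ≤ Real.exp (-Real.pi * (psiMN m (j + 2 * m * k) τ z) ^ 2) *
        Real.exp (Real.pi * (j + 2 * m * k) ^ 2 * τ.im / (2 * m)
          - 2 * Real.pi * (j + 2 * m * k) * z.im) :=
      mul_le_mul_of_nonneg_right hE (Real.exp_pos _).le
    _ ≤ _ := by
      rw [← Real.exp_add]
      apply Real.exp_le_exp.2
      apply le_of_eq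
      have hpsi : (psiMN m (j + 2 * m * k) τ z) ^ 2
          = (j + 2 * m * k - 2 * m * z.im / τ.im) ^ 2 * (τ.im / m) := by
        rw [psiMN, mul_pow, Real.sq_sqrt (div_nonneg hτ.le hm.le)]
      rw [hpsi]
      field_simp
      ring

lemma sum_aux_pos (hsgn : sgn = 1 ∨ sgn = -1) (hm1 : 1 / 2 ≤ m) (hτ : 0 < τ.im) :
    Summable (fun n : ℕ => rterm sgn j m τ z (n : ℤ)) := by
  have hm : 0 < m := lt_of_lt_of_le (by norm_num) hm1
  set a₀ : ℝ := 2 * m * z.im / τ.im with ha₀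
  set N : ℕ := ⌈(a₀ - j) / (2 * m)⌉₊ with hN
  rw [← summable_nat_add_iff N]
  set A : ℝ := 2 * Real.pi * m * τ.im with hA
  set B : ℝ := 4 * Real.pi * m * z.im - 2 * Real.pi * τ.im * j with hB
  set C : ℝ := -Real.pi * τ.im * j ^ 2 / (2 * m) + 2 * Real.pi * z.im * j
      - 4 * Real.pi * m * z.im ^ 2 / τ.im with hC
  apply Summable.of_norm_bounded
    (g := fun n : ℕ => Real.exp (-A * n ^ 2 + (B - 2 * A * N) * n + (-A * N ^ 2 + B * N + C)))
    (summable_exp_quadratic _ _ _ (by positivity))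
  intro n
  have hkr : (((n + N : ℕ) : ℤ) : ℝ) = (n : ℝ) + (N : ℝ) := by push_cast; ring
  have hkN : (a₀ - j) / (2 * m) ≤ (((n + N : ℕ) : ℤ) : ℝ) := by
    rw [hkr]
    have := Nat.le_ceil ((a₀ - j) / (2 * m))
    have hn0 : (0:ℝ) ≤ (n : ℝ) := Nat.cast_nonneg n
    rw [← hN] at this
    linarith
  have hknn : (0:ℝ) ≤ (((n + N : ℕ) : ℤ) : ℝ) := by positivity
  set k : ℤ := ((n + N : ℕ) : ℤ) with hk
  -- the sign is 1
  have hs : Real.sign (j + 2 * m * k - 1 / 2 - j + 2 * m) = 1 := by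
    apply Real.sign_of_pos
    nlinarith [hknn, hm1]
  -- psi is nonneg
  have hψ : 0 ≤ psiMN m (j + 2 * m * k) τ z := by
    apply mul_nonneg _ (Real.sqrt_nonneg _)
    rw [← ha₀]
    rw [div_le_iff₀ (by positivity : (0:ℝ) < 2 * m)] at hkN
    linarith [hkN]
  have hE : |Real.sign (j + 2 * m * k - 1 / 2 - j + 2 * m)
        - Efun (psiMN m (j + 2 * m * k) τ z)|
      ≤ Real.exp (-Real.pi * (psiMN m (j + 2 * m * k) τ z) ^ 2) := by
    rw [hs]
    exact Efun_close _ hψ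
  calc ‖rterm sgn j m τ z k‖ ≤ _ := norm_rterm_le hsgn hm hτ k hE
    _ ≤ _ := by
      apply Real.exp_le_exp.2
      apply le_of_eq
      rw [hk, hkr]
      ring

lemma sum_aux_neg (hsgn : sgn = 1 ∨ sgn = -1) (hm1 : 1 / 2 ≤ m) (hτ : 0 < τ.im) :
    Summable (fun n : ℕ => rterm sgn j m τ z (-(n : ℤ))) := by
  have hm : 0 < m := lt_of_lt_of_le (by norm_num) hm1
  set a₀ : ℝ := 2 * m * z.im / τ.im with ha₀
  set N : ℕ := max 1 ⌈(j - a₀) / (2 * m)⌉₊ with hN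
  rw [← summable_nat_add_iff N]
  set A : ℝ := 2 * Real.pi * m * τ.im with hA
  set B : ℝ := 4 * Real.pi * m * z.im - 2 * Real.pi * τ.im * j with hB
  set C : ℝ := -Real.pi * τ.im * j ^ 2 / (2 * m) + 2 * Real.pi * z.im * j
      - 4 * Real.pi * m * z.im ^ 2 / τ.im with hC
  apply Summable.of_norm_bounded
    (g := fun n : ℕ => Real.exp (-A * n ^ 2 + (-B - 2 * A * N) * n + (-A * N ^ 2 - B * N + C)))
    (summable_exp_quadratic _ _ _ (by positivity))
  intro n
  have hkr : ((-((n + N : ℕ) : ℤ) : ℤ) : ℝ) = -((n : ℝ) + (N : ℝ)) := by push_cast; ring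
  have hN1 : (1 : ℝ) ≤ (N : ℝ) := by
    have : 1 ≤ N := le_max_left _ _
    exact_mod_cast this
  have hceil : (j - a₀) / (2 * m) ≤ (N : ℝ) := by
    refine le_trans (Nat.le_ceil _) ?_
    exact_mod_cast Nat.le_of_eq rfl |>.trans (le_max_right 1 _)
  have hn0 : (0:ℝ) ≤ (n : ℝ) := Nat.cast_nonneg n
  set k : ℤ := -((n + N : ℕ) : ℤ) with hk
  have hkrr : ((k : ℤ) : ℝ) = -((n : ℝ) + (N : ℝ)) := hkr
  have hkN : ((k : ℤ) : ℝ) ≤ (a₀ - j) / (2 * m) := by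
    rw [hkrr]
    have h2 : -(N : ℝ) ≤ (a₀ - j) / (2 * m) := by
      have : -(N:ℝ) ≤ -((j - a₀) / (2 * m)) := by linarith
      calc -(N:ℝ) ≤ -((j - a₀) / (2 * m)) := this
        _ = (a₀ - j) / (2 * m) := by ring
    linarith
  have hkle : ((k : ℤ) : ℝ) ≤ -1 := by rw [hkrr]; linarith
  -- the sign is -1
  have hs : Real.sign (j + 2 * m * k - 1 / 2 - j + 2 * m) = -1 := by
    apply Real.sign_of_neg
    nlinarith [hkle, hm]
  -- psi is nonpos
  have hψ : psiMN m (j + 2 * m * k) τ z ≤ 0 := by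
    apply mul_nonpos_of_nonpos_of_nonneg _ (Real.sqrt_nonneg _)
    rw [← ha₀]
    rw [le_div_iff₀ (by positivity : (0:ℝ) < 2 * m)] at hkN
    nlinarith [hkN]
  have hE : |Real.sign (j + 2 * m * k - 1 / 2 - j + 2 * m)
        - Efun (psiMN m (j + 2 * m * k) τ z)|
      ≤ Real.exp (-Real.pi * (psiMN m (j + 2 * m * k) τ z) ^ 2) := by
    rw [hs]
    have hodd : Efun (psiMN m (j + 2 * m * k) τ z)
        = -Efun (-(psiMN m (j + 2 * m * k) τ z)) := by
      rw [← Efun_neg, neg_neg]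
    rw [hodd]
    have h1 : |(-1 : ℝ) - -Efun (-(psiMN m (j + 2 * m * k) τ z))|
        = |1 - Efun (-(psiMN m (j + 2 * m * k) τ z))| := by
      rw [← abs_neg]; congr 1; ring
    rw [h1]
    have := Efun_close (-(psiMN m (j + 2 * m * k) τ z)) (by linarith)
    simpa [neg_pow] using this
  calc ‖rterm sgn j m τ z k‖ ≤ _ := norm_rterm_le hsgn hm hτ k hE
    _ ≤ _ := by
      apply Real.exp_le_exp.2
      apply le_of_eq
      rw [hkrr]
      ring

lemma summable_rterm (hsgn : sgn = 1 ∨ sgn = -1) (hm1 : 1 / 2 ≤ m) (hτ : 0 < τ.im) :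
    Summable (rterm sgn j m τ z) :=
  Summable.of_nat_of_neg (sum_aux_pos hsgn hm1 hτ) (sum_aux_neg hsgn hm1 hτ)

end Summability
noncomputable section Transform
set_option maxHeartbeats 1000000
open Complex Real

variable {sgn : ℂ} {τ v : ℂ}

lemma rterm_shift_one (j2 m2 : ℤ) (k : ℤ) :
    rterm sgn ((j2:ℝ)/2) ((m2:ℝ)/2) τ (v + 1) k
      = (-1 : ℂ) ^ j2 * rterm sgn ((j2:ℝ)/2) ((m2:ℝ)/2) τ v k := by
  unfold rterm
  have hψ : psiMN ((m2:ℝ)/2) ((j2:ℝ)/2 + 2 * ((m2:ℝ)/2) * k) τ (v + 1)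
      = psiMN ((m2:ℝ)/2) ((j2:ℝ)/2 + 2 * ((m2:ℝ)/2) * k) τ v := by
    unfold psiMN; simp
  rw [hψ]
  have harg : (-(Real.pi : ℂ) * Complex.I * ((((j2:ℝ)/2 + 2 * ((m2:ℝ)/2) * k : ℝ)) : ℂ) ^ 2 * τ
        / (2 * ((((m2:ℝ)/2 : ℝ)) : ℂ))
      + 2 * (Real.pi : ℂ) * Complex.I * ((((j2:ℝ)/2 + 2 * ((m2:ℝ)/2) * k : ℝ)) : ℂ) * (v + 1))
      = (-(Real.pi : ℂ) * Complex.I * ((((j2:ℝ)/2 + 2 * ((m2:ℝ)/2) * k : ℝ)) : ℂ) ^ 2 * τ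
        / (2 * ((((m2:ℝ)/2 : ℝ)) : ℂ))
      + 2 * (Real.pi : ℂ) * Complex.I * ((((j2:ℝ)/2 + 2 * ((m2:ℝ)/2) * k : ℝ)) : ℂ) * v)
      + ((j2 : ℂ) * ((Real.pi : ℂ) * Complex.I)
        + ((m2 * k : ℤ) : ℂ) * (2 * (Real.pi : ℂ) * Complex.I)) := by
    push_cast
    ring
  rw [harg, Complex.exp_add, Complex.exp_add]
  have h1 : Complex.exp ((j2 : ℂ) * ((Real.pi : ℂ) * Complex.I)) = (-1 : ℂ) ^ j2 := by
    rw [Complex.exp_int_mul, Complex.exp_pi_mul_I]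
  have h2 : Complex.exp (((m2 * k : ℤ) : ℂ) * (2 * (Real.pi : ℂ) * Complex.I)) = 1 := by
    exact Complex.exp_int_mul_two_pi_mul_I _
  rw [Complex.exp_add, h1, h2]
  ring

lemma rterm_shift_tau (j2 m2 : ℤ) (hm2 : 0 < m2) (hs0 : sgn ≠ 0) (hτ : τ.im ≠ 0) (k : ℤ) :
    sgn * mexp ((m2:ℂ)/2 * (2 * v - τ)) * rterm sgn ((j2:ℝ)/2) ((m2:ℝ)/2) τ (v - τ) k
      = rterm sgn ((j2:ℝ)/2) ((m2:ℝ)/2) τ v (k + 1)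
        - (if k = -1 then
            2 * mexp (τ * (-(((j2:ℂ)/2) ^ 2 / (4 * ((m2:ℂ)/2))))) * mexp ((j2:ℂ)/2 * v)
          else 0) := by
  have hm2' : (m2 : ℂ) ≠ 0 := Int.cast_ne_zero.mpr hm2.ne'
  have hm2r : (1:ℝ) ≤ (m2 : ℝ) := by exact_mod_cast hm2
  set j : ℝ := (j2:ℝ)/2 with hj
  set m : ℝ := (m2:ℝ)/2 with hm
  have hψ : psiMN m (j + 2 * m * k) τ (v - τ) = psiMN m (j + 2 * m * (k+1 : ℤ)) τ v := by
    unfold psiMN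
    congr 1
    rw [Complex.sub_im]
    push_cast
    field_simp
    ring
  have hexp : mexp ((m2:ℂ)/2 * (2 * v - τ)) *
      Complex.exp (-(Real.pi : ℂ) * Complex.I * (((j + 2 * m * k : ℝ)) : ℂ) ^ 2 * τ
          / (2 * ((m : ℝ) : ℂ))
        + 2 * (Real.pi : ℂ) * Complex.I * (((j + 2 * m * k : ℝ)) : ℂ) * (v - τ))
      = Complex.exp (-(Real.pi : ℂ) * Complex.I * (((j + 2 * m * (k+1:ℤ) : ℝ)) : ℂ) ^ 2 * τ
          / (2 * ((m : ℝ) : ℂ))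
        + 2 * (Real.pi : ℂ) * Complex.I * (((j + 2 * m * (k+1:ℤ) : ℝ)) : ℂ) * v) := by
    unfold mexp
    rw [← Complex.exp_add]
    congr 1
    rw [hj, hm]
    push_cast
    field_simp
    ring
  unfold rterm
  rcases lt_trichotomy k (-1) with hk | hk | hk
  · -- k ≤ -2 : both signs are -1
    have hk2 : k ≤ -2 := by omega
    have hkr : (k : ℝ) ≤ -2 := by exact_mod_cast hk2
    have h1 : Real.sign (j + 2 * m * k - 1/2 - j + 2 * m) = -1 := by
      apply Real.sign_of_neg
      rw [hm]
      nlinarith [hm2r, hkr]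
    have h2 : Real.sign (j + 2 * m * (k+1:ℤ) - 1/2 - j + 2 * m) = -1 := by
      apply Real.sign_of_neg
      rw [hm]
      push_cast
      nlinarith [hm2r, hkr]
    rw [if_neg (by omega), sub_zero, h1, h2, hψ, zpow_add_one₀ hs0, ← hexp]
    ring
  · -- k = -1
    subst hk
    have h1 : Real.sign (j + 2 * m * (-1 : ℤ) - 1/2 - j + 2 * m) = -1 := by
      apply Real.sign_of_neg
      push_cast
      nlinarith [hm2r]
    have h2 : Real.sign (j + 2 * m * ((-1:ℤ)+1:ℤ) - 1/2 - j + 2 * m) = 1 := by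
      apply Real.sign_of_pos
      rw [hm]
      push_cast
      nlinarith [hm2r]
    have hC : 2 * mexp (τ * (-(((j2:ℂ)/2) ^ 2 / (4 * ((m2:ℂ)/2))))) * mexp ((j2:ℂ)/2 * v)
        = 2 * Complex.exp (-(Real.pi : ℂ) * Complex.I
            * (((j + 2 * m * ((-1:ℤ)+1:ℤ) : ℝ)) : ℂ) ^ 2 * τ / (2 * ((m : ℝ) : ℂ))
          + 2 * (Real.pi : ℂ) * Complex.I * (((j + 2 * m * ((-1:ℤ)+1:ℤ) : ℝ)) : ℂ) * v) := by
      unfold mexp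
      rw [mul_assoc, ← Complex.exp_add]
      congr 2
      rw [hj, hm]
      push_cast
      field_simp
      ring
    have hca : ∀ x : ℝ, ((-1 - x : ℝ) : ℂ) = -1 - (x:ℂ) := by intro x; push_cast; ring
    have hcb : ∀ x : ℝ, ((1 - x : ℝ) : ℂ) = 1 - (x:ℂ) := by intro x; push_cast; ring
    rw [if_pos rfl, h1, h2, hψ, hC, zpow_add_one₀ hs0, ← hexp, zpow_neg_one, hca, hcb]
    field_simp
    ring
  · -- k ≥ 0 : both signs are 1
    have hk0 : (0:ℤ) ≤ k := by omega
    have hkr : (0:ℝ) ≤ (k : ℝ) := by exact_mod_cast hk0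
    have h1 : Real.sign (j + 2 * m * k - 1/2 - j + 2 * m) = 1 := by
      apply Real.sign_of_pos
      rw [hm]
      nlinarith [hm2r, hkr]
    have h2 : Real.sign (j + 2 * m * (k+1:ℤ) - 1/2 - j + 2 * m) = 1 := by
      apply Real.sign_of_pos
      rw [hm]
      push_cast
      nlinarith [hm2r, hkr]
    rw [if_neg (by omega), sub_zero, h1, h2, hψ, zpow_add_one₀ hs0, ← hexp]
    ring

end Transform
noncomputable section Main
open Complex Real

lemma mexp_mul (a b : ℂ) : mexp a * mexp b = mexp (a + b) := by
  unfold mexp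
  rw [show 2 * (Real.pi:ℂ) * Complex.I * (a + b)
    = 2 * (Real.pi:ℂ) * Complex.I * a + 2 * (Real.pi:ℂ) * Complex.I * b by ring,
    Complex.exp_add]

variable {sgn : ℂ} {τ : ℂ}

lemma RS_shift_tau (m2 : ℤ) (hm2 : 0 < m2) (j2 : ℤ) (hsgn : sgn = 1 ∨ sgn = -1)
    (hτ : 0 < τ.im) (v : ℂ) :
    RS sgn ((j2:ℝ)/2) ((m2:ℝ)/2) τ v
      - sgn * mexp ((m2:ℂ)/2 * (2 * v - τ)) * RS sgn ((j2:ℝ)/2) ((m2:ℝ)/2) τ (v - τ)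
    = 2 * mexp (τ * (-(((j2:ℂ)/2) ^ 2 / (4 * ((m2:ℂ)/2))))) * mexp ((j2:ℂ)/2 * v) := by
  have hs0 : sgn ≠ 0 := by rcases hsgn with h | h <;> simp [h]
  have hm1 : (1:ℝ)/2 ≤ (m2:ℝ)/2 := by
    have : (1:ℝ) ≤ (m2:ℝ) := by exact_mod_cast hm2
    linarith
  have hsum : Summable (rterm sgn ((j2:ℝ)/2) ((m2:ℝ)/2) τ v) := summable_rterm hsgn hm1 hτ
  have h1 : sgn * mexp ((m2:ℂ)/2 * (2 * v - τ)) * RS sgn ((j2:ℝ)/2) ((m2:ℝ)/2) τ (v - τ)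
      = ∑' k : ℤ, sgn * mexp ((m2:ℂ)/2 * (2 * v - τ))
          * rterm sgn ((j2:ℝ)/2) ((m2:ℝ)/2) τ (v - τ) k := by
    rw [RS_eq, tsum_mul_left]
  rw [h1, tsum_congr (fun k => rterm_shift_tau j2 m2 hm2 hs0 hτ.ne' k)]
  have hshift : Summable (fun k : ℤ => rterm sgn ((j2:ℝ)/2) ((m2:ℝ)/2) τ v (k + 1)) :=
    hsum.comp_injective (add_left_injective 1)
  rw [Summable.tsum_sub hshift ((hasSum_ite_eq (-1:ℤ)
      (2 * mexp (τ * (-(((j2:ℂ)/2) ^ 2 / (4 * ((m2:ℂ)/2))))) * mexp ((j2:ℂ)/2 * v))).summable),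
    (hasSum_ite_eq (-1:ℤ) _).tsum_eq]
  have heq : (∑' k : ℤ, rterm sgn ((j2:ℝ)/2) ((m2:ℝ)/2) τ v (k + 1))
      = ∑' k : ℤ, rterm sgn ((j2:ℝ)/2) ((m2:ℝ)/2) τ v k :=
    (Equiv.addRight (1:ℤ)).tsum_eq (rterm sgn ((j2:ℝ)/2) ((m2:ℝ)/2) τ v)
  rw [heq, RS_eq]
  ring

end Main

/-- transformation properties of the functions `R^{±}_{j,m}`,
`m = m2/2 ∈ (1/2)ℤ_{>0}`, `j = j2/2 ∈ (1/2)ℤ`, with sign `sgn ∈ {1, -1}`;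
`(-1)^{2j} = (-1)^{j2}`, `∓` is `-sgn`, and `q^x = mexp (τ * x)`. -/
theorem stmt15 (m2 : ℤ) (hm2 : 0 < m2) (j2 : ℤ) (sgn : ℂ) (hsgn : sgn = 1 ∨ sgn = -1)
    (τ v : ℂ) (hτ : 0 < τ.im) :
    (RS sgn ((j2 : ℝ) / 2) ((m2 : ℝ) / 2) τ (v + 1) =
      (-1 : ℂ) ^ j2 * RS sgn ((j2 : ℝ) / 2) ((m2 : ℝ) / 2) τ v) ∧
    (RS sgn ((j2 : ℝ) / 2) ((m2 : ℝ) / 2) τ v -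
        sgn * mexp ((m2 : ℂ) / 2 * (2 * v - τ)) * RS sgn ((j2 : ℝ) / 2) ((m2 : ℝ) / 2) τ (v - τ) =
      2 * mexp (τ * (-(((j2 : ℂ) / 2) ^ 2 / (4 * ((m2 : ℂ) / 2))))) *
        mexp ((j2 : ℂ) / 2 * v)) ∧
    (RS sgn ((j2 : ℝ) / 2) ((m2 : ℝ) / 2) τ v -
        mexp (4 * ((m2 : ℂ) / 2) * (v - τ)) * RS sgn ((j2 : ℝ) / 2) ((m2 : ℝ) / 2) τ (v - 2 * τ) =
      2 * (mexp (τ * (-(((j2 : ℂ) / 2) ^ 2 / (4 * ((m2 : ℂ) / 2))))) * mexp ((j2 : ℂ) / 2 * v) +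
        sgn * mexp (τ * (-(((j2 : ℂ) / 2 + 2 * ((m2 : ℂ) / 2)) ^ 2 / (4 * ((m2 : ℂ) / 2))))) *
          mexp (((j2 : ℂ) / 2 + 2 * ((m2 : ℂ) / 2)) * v))) := by
  have hm2' : (m2 : ℂ) ≠ 0 := Int.cast_ne_zero.mpr hm2.ne'
  have hsgn2 : sgn * sgn = 1 := by rcases hsgn with h | h <;> rw [h] <;> ring
  refine ⟨?_, RS_shift_tau m2 hm2 j2 hsgn hτ v, ?_⟩
  · calc RS sgn ((j2 : ℝ) / 2) ((m2 : ℝ) / 2) τ (v + 1)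
        = ∑' k : ℤ, ((-1:ℂ) ^ j2 * rterm sgn ((j2:ℝ)/2) ((m2:ℝ)/2) τ v k) := by
          rw [RS_eq]
          exact tsum_congr (fun k => rterm_shift_one j2 m2 k)
      _ = (-1 : ℂ) ^ j2 * RS sgn ((j2 : ℝ) / 2) ((m2 : ℝ) / 2) τ v := by
          rw [tsum_mul_left, RS_eq]
  · have hb1 := RS_shift_tau m2 hm2 j2 hsgn hτ v
    have hb2 := RS_shift_tau m2 hm2 j2 hsgn hτ (v - τ)
    rw [show v - τ - τ = v - 2 * τ by ring] at hb2
    have h3 : mexp ((m2:ℂ)/2 * (2 * v - τ)) * mexp ((m2:ℂ)/2 * (2 * (v - τ) - τ))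
        = mexp (4 * ((m2:ℂ)/2) * (v - τ)) := by
      rw [mexp_mul]
      congr 1
      ring
    have h4 : mexp ((m2:ℂ)/2 * (2 * v - τ))
          * mexp (τ * (-(((j2:ℂ)/2) ^ 2 / (4 * ((m2:ℂ)/2)))))
          * mexp ((j2:ℂ)/2 * (v - τ))
        = mexp (τ * (-(((j2 : ℂ) / 2 + 2 * ((m2 : ℂ) / 2)) ^ 2 / (4 * ((m2 : ℂ) / 2)))))
          * mexp (((j2 : ℂ) / 2 + 2 * ((m2 : ℂ) / 2)) * v) := by
      rw [mexp_mul, mexp_mul, mexp_mul]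
      congr 1
      have hinv : (m2:ℂ) * (m2:ℂ)⁻¹ = 1 := mul_inv_cancel₀ hm2'
      field_simp
      ring
    linear_combination hb1 + sgn * mexp ((m2:ℂ)/2 * (2 * v - τ)) * hb2
      + (sgn * sgn) * (RS sgn ((j2:ℝ)/2) ((m2:ℝ)/2) τ (v - 2 * τ)) * h3
      + (RS sgn ((j2:ℝ)/2) ((m2:ℝ)/2) τ (v - 2 * τ)) * mexp (4 * ((m2:ℂ)/2) * (v - τ)) * hsgn2
      + 2 * sgn * h4
end

section
/- Let m ∈ (1/2)ℤ_{>0} and s ∈ (1/2)ℤ. For every τ with Im τ > 0 and all u, v ∈ ℂ: (a) if a, b ∈ ℤ then φ^{±[m;s]}_add(τ, u + a, v + b) = e^{2πi s (b−a)} φ^{±[m;s]}_add(τ, u, v); (b) if m ∈ ℤ and a, b ∈ (1/2)ℤ satisfy a + b ∈ ℤ, then φ^{±[m;s]}_add(τ, u + a, v + b) = e^{2πi s (b−a)} φ^{±[m;s]}_add(τ, u, v); (c) if m ∉ ℤ and a, b ∈ 1/2 + ℤ, then φ^{±[m;s]}_add(τ, u + a, v + b) = e^{2πi s (b−a)} φ^{∓[m;s]}_add(τ,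 u, v). -/
/-- The modifier in the coordinates `u = -(z₁+z₂)/2`, `v = (z₁-z₂)/2`:
`φ^{±[m;s]}_add(τ,u,v) = -(1/2) Σ_{k ∈ s+ℤ, s ≤ k < s+2m} R^{±}_{k,m}(τ,v) Θ^{±}_{-k,m}(τ,2u)`,
where `k = s + i`, `0 ≤ i < ⌈2m⌉`. -/
noncomputable def phiAddUV (sgn : ℂ) (m s : ℝ) (τ u v : ℂ) : ℂ :=
  -(1 / 2) * ∑ i ∈ Finset.range ⌈2 * m⌉₊,
    RS sgn (s + i) m τ v * ThetaS sgn (-(s + i)) m τ (2 * u)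


lemma mexp_add' (x y : ℂ) : mexp (x + y) = mexp x * mexp y := by
  unfold mexp; rw [mul_add, Complex.exp_add]

lemma mexp_int' (n : ℤ) : mexp (n : ℂ) = 1 := by
  unfold mexp
  rw [show 2*(Real.pi:ℂ)*Complex.I*(n:ℂ) = (n:ℂ)*(2*Real.pi*Complex.I) by ring]
  exact Complex.exp_int_mul_two_pi_mul_I n

lemma mexp_int_div_two (p : ℤ) : mexp ((p:ℂ)/2) = (-1 : ℂ)^p := by
  unfold mexp
  rw [show 2*(Real.pi:ℂ)*Complex.I*((p:ℂ)/2) = (p:ℂ)*(Real.pi*Complex.I) by ring,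
    Complex.exp_int_mul, Complex.exp_pi_mul_I]

lemma mexp_eq_of_sub_int {x y : ℂ} (n : ℤ) (h : x = y + n) : mexp x = mexp y := by
  rw [h, mexp_add', mexp_int', mul_one]

lemma RS_shift (sgn ε : ℂ) (j m : ℝ) (τ z c : ℂ) (hc : c.im = 0)
    (hε : ∀ k : ℤ, mexp (2*(m:ℂ)*(k:ℂ)*c) = ε ^ k) :
    RS sgn j m τ (z + c) = mexp ((j:ℂ) * c) * RS (sgn * ε) j m τ z := by
  unfold RS
  rw [← tsum_mul_left]
  refine tsum_congr fun k => ?_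
  have hpsi : psiMN m (j + 2*m*k) τ (z + c) = psiMN m (j + 2*m*k) τ z := by
    simp [psiMN, hc]
  rw [hpsi]
  rw [show -(Real.pi : ℂ) * Complex.I * (((j + 2 * m * k : ℝ)) : ℂ) ^ 2 * τ / (2 * (m : ℂ))
      + 2 * (Real.pi : ℂ) * Complex.I * (((j + 2 * m * k : ℝ)) : ℂ) * (z + c)
      = (-(Real.pi : ℂ) * Complex.I * (((j + 2 * m * k : ℝ)) : ℂ) ^ 2 * τ / (2 * (m : ℂ))
      + 2 * (Real.pi : ℂ) * Complex.I * (((j + 2 * m * k : ℝ)) : ℂ) * z)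
      + 2 * (Real.pi : ℂ) * Complex.I * ((((j + 2 * m * k : ℝ)) : ℂ) * c) by ring,
    Complex.exp_add]
  have h2 : Complex.exp (2 * (Real.pi : ℂ) * Complex.I * ((((j + 2 * m * k : ℝ)) : ℂ) * c))
      = mexp ((j:ℂ)*c) * ε ^ k := by
    have : ((((j + 2 * m * k : ℝ)) : ℂ) * c) = (j:ℂ)*c + 2*(m:ℂ)*(k:ℂ)*c := by
      push_cast; ring
    rw [show Complex.exp (2 * (Real.pi : ℂ) * Complex.I * ((((j + 2 * m * k : ℝ)) : ℂ) * c))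
        = mexp ((((j + 2 * m * k : ℝ)) : ℂ) * c) from rfl, this, mexp_add', hε k]
  rw [h2, mul_zpow]
  ring

lemma ThetaS_shift (sgn ε : ℂ) (j m : ℝ) (hm : m ≠ 0) (τ z c : ℂ)
    (hε : ∀ n : ℤ, mexp ((m:ℂ)*c*(n:ℂ)) = ε ^ n) :
    ThetaS sgn j m τ (z + c) = mexp ((j:ℂ) * c / 2) * ThetaS (sgn * ε) j m τ z := by
  unfold ThetaS
  rw [← tsum_mul_left]
  refine tsum_congr fun n => ?_
  set α : ℂ := ((j / (2 * m) : ℝ) : ℂ) with hα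
  have hsplit : (m : ℂ) * (z + c) * ((n : ℂ) + α) + τ * (m : ℂ) * ((n : ℂ) + α) ^ 2
      = ((m : ℂ) * z * ((n : ℂ) + α) + τ * (m : ℂ) * ((n : ℂ) + α) ^ 2)
        + ((m:ℂ)*c*(n:ℂ) + (m:ℂ)*c*α) := by ring
  have hm' : (m:ℂ) ≠ 0 := Complex.ofReal_ne_zero.mpr hm
  have hmα : (m:ℂ)*c*α = (j:ℂ)*c/2 := by
    rw [hα]
    push_cast
    field_simp
  rw [hsplit, mexp_add', mexp_add' ((m:ℂ)*c*(n:ℂ)), hε n, hmα, mul_zpow]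
  ring

lemma phiAddUV_shift (sgn ε : ℂ) (m s : ℝ) (hm : m ≠ 0) (τ u v cu cv : ℂ)
    (hcv : cv.im = 0)
    (hεR : ∀ k : ℤ, mexp (2*(m:ℂ)*(k:ℂ)*cv) = ε ^ k)
    (hεT : ∀ n : ℤ, mexp ((m:ℂ)*(2*cu)*(n:ℂ)) = ε ^ n)
    (hph : ∀ i : ℕ, mexp (((s+i:ℝ):ℂ)*cv) * mexp (((-(s+i):ℝ):ℂ)*(2*cu)/2)
        = mexp ((s:ℂ)*(cv - cu))) :
    phiAddUV sgn m s τ (u + cu) (v + cv) = mexp ((s:ℂ)*(cv - cu)) * phiAddUV (sgn * ε) m s τ u v := by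
  unfold phiAddUV
  rw [mul_comm (mexp ((s:ℂ)*(cv - cu))), mul_assoc, Finset.sum_mul]
  congr 1
  refine Finset.sum_congr rfl fun i _ => ?_
  have h2u : 2*(u + cu) = 2*u + 2*cu := by ring
  rw [h2u, RS_shift sgn ε (s+i) m τ v cv hcv hεR,
    ThetaS_shift sgn ε (-(s+i)) m hm τ (2*u) (2*cu) hεT]
  rw [show mexp (((s+i:ℝ):ℂ) * cv) * RS (sgn*ε) (s+i) m τ v *
      (mexp (((-(s+i):ℝ):ℂ) * (2*cu) / 2) * ThetaS (sgn*ε) (-(s+i)) m τ (2*u))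
      = (mexp (((s+i:ℝ):ℂ)*cv) * mexp (((-(s+i):ℝ):ℂ)*(2*cu)/2)) *
        (RS (sgn*ε) (s+i) m τ v * ThetaS (sgn*ε) (-(s+i)) m τ (2*u)) by ring,
    hph i]
  ring

/-- shift properties of `φ^{±[m;s]}_add`, `m = m2/2 ∈ (1/2)ℤ_{>0}`,
`s = s2/2 ∈ (1/2)ℤ`: (a) integer shifts; (b) for `m ∈ ℤ` (`m2` even), half-integer
shifts `a = a2/2, b = b2/2` with `a + b ∈ ℤ` (`a2 + b2` even); (c) for `m ∉ ℤ`
(`m2` odd), shifts by `a + 1/2, b + 1/2 ∈ 1/2 + ℤ`, with the sign flipped. -/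
theorem stmt16 (m2 : ℤ) (hm2 : 0 < m2) (s2 : ℤ) (sgn : ℂ) (hsgn : sgn = 1 ∨ sgn = -1)
    (τ u v : ℂ) (hτ : 0 < τ.im) :
    (∀ a b : ℤ,
      phiAddUV sgn ((m2 : ℝ) / 2) ((s2 : ℝ) / 2) τ (u + a) (v + b) =
        mexp ((s2 : ℂ) / 2 * ((b : ℂ) - (a : ℂ))) *
          phiAddUV sgn ((m2 : ℝ) / 2) ((s2 : ℝ) / 2) τ u v) ∧
    (Even m2 → ∀ a2 b2 : ℤ, Even (a2 + b2) →
      phiAddUV sgn ((m2 : ℝ) / 2) ((s2 : ℝ) / 2) τ (u + (a2 : ℂ) / 2) (v + (b2 : ℂ) / 2) =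
        mexp ((s2 : ℂ) / 2 * ((b2 : ℂ) / 2 - (a2 : ℂ) / 2)) *
          phiAddUV sgn ((m2 : ℝ) / 2) ((s2 : ℝ) / 2) τ u v) ∧
    (¬ Even m2 → ∀ a b : ℤ,
      phiAddUV sgn ((m2 : ℝ) / 2) ((s2 : ℝ) / 2) τ (u + ((a : ℂ) + 1 / 2)) (v + ((b : ℂ) + 1 / 2)) =
        mexp ((s2 : ℂ) / 2 * (((b : ℂ) + 1 / 2) - ((a : ℂ) + 1 / 2))) *
          phiAddUV (-sgn) ((m2 : ℝ) / 2) ((s2 : ℝ) / 2) τ u v) := by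
  have hm2r : (0:ℝ) < (m2:ℝ) := by exact_mod_cast hm2
  have hm : (m2 : ℝ) / 2 ≠ 0 := by positivity
  refine ⟨?_, ?_, ?_⟩
  · -- case (a)
    intro a b
    have hcv : ((b:ℂ)).im = 0 := by simp
    have hεR : ∀ k : ℤ, mexp (2*((((m2:ℝ)/2):ℝ):ℂ)*(k:ℂ)*(b:ℂ)) = (1:ℂ) ^ k := by
      intro k
      rw [one_zpow, show 2*((((m2:ℝ)/2):ℝ):ℂ)*(k:ℂ)*(b:ℂ) = ((m2*k*b : ℤ):ℂ) by push_cast; ring,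
        mexp_int']
    have hεT : ∀ n : ℤ, mexp (((((m2:ℝ)/2):ℝ):ℂ)*(2*(a:ℂ))*(n:ℂ)) = (1:ℂ) ^ n := by
      intro n
      rw [one_zpow, show ((((m2:ℝ)/2):ℝ):ℂ)*(2*(a:ℂ))*(n:ℂ) = ((m2*a*n : ℤ):ℂ) by push_cast; ring,
        mexp_int']
    have hph : ∀ i : ℕ, mexp ((((m2:ℝ)/2*0 + ((s2:ℝ)/2 + i) : ℝ):ℂ)*(b:ℂ)) *
        mexp (((-((s2:ℝ)/2 + i) : ℝ):ℂ)*(2*(a:ℂ))/2)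
        = mexp (((((s2:ℝ)/2):ℝ):ℂ)*((b:ℂ) - (a:ℂ))) := by
      intro i
      rw [← mexp_add']
      exact mexp_eq_of_sub_int ((i:ℤ)*(b-a)) (by push_cast; ring)
    have key := phiAddUV_shift sgn 1 ((m2:ℝ)/2) ((s2:ℝ)/2) hm τ u v (a:ℂ) (b:ℂ) hcv hεR hεT
      (by intro i; have := hph i; simpa using this)
    rw [mul_one] at key
    rw [show (((((s2:ℝ)/2):ℝ)):ℂ) * ((b:ℂ) - (a:ℂ)) = (s2:ℂ)/2 * ((b:ℂ) - (a:ℂ)) by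
      push_cast; ring] at key
    exact key
  · -- case (b)
    rintro ⟨m', hm'⟩ a2 b2 ⟨d, hd⟩
    have hm2c : (m2:ℂ) = 2*m' := by rw [hm']; push_cast; ring
    have hdc : (a2:ℂ) + b2 = 2*d := by
      have := congrArg (Int.cast : ℤ → ℂ) hd
      push_cast at this
      linear_combination this
    have hcv : ((b2:ℂ)/2).im = 0 := by simp
    have hεR : ∀ k : ℤ, mexp (2*((((m2:ℝ)/2):ℝ):ℂ)*(k:ℂ)*((b2:ℂ)/2)) = (1:ℂ) ^ k := by
      intro k
      rw [one_zpow, show 2*((((m2:ℝ)/2):ℝ):ℂ)*(k:ℂ)*((b2:ℂ)/2) = ((m'*k*b2 : ℤ):ℂ) by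
        push_cast; linear_combination ((k:ℂ)*(b2:ℂ)/2) * hm2c, mexp_int']
    have hεT : ∀ n : ℤ, mexp (((((m2:ℝ)/2):ℝ):ℂ)*(2*((a2:ℂ)/2))*(n:ℂ)) = (1:ℂ) ^ n := by
      intro n
      rw [one_zpow, show ((((m2:ℝ)/2):ℝ):ℂ)*(2*((a2:ℂ)/2))*(n:ℂ) = ((m'*a2*n : ℤ):ℂ) by
        push_cast; linear_combination ((a2:ℂ)*(n:ℂ)/2) * hm2c, mexp_int']
    have hph : ∀ i : ℕ, mexp (((((s2:ℝ)/2 + i) : ℝ):ℂ)*((b2:ℂ)/2)) *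
        mexp (((-((s2:ℝ)/2 + i) : ℝ):ℂ)*(2*((a2:ℂ)/2))/2)
        = mexp (((((s2:ℝ)/2):ℝ):ℂ)*((b2:ℂ)/2 - (a2:ℂ)/2)) := by
      intro i
      rw [← mexp_add']
      refine mexp_eq_of_sub_int ((i:ℤ)*(d - a2)) ?_
      push_cast
      linear_combination ((i:ℂ)/2) * hdc
    have key := phiAddUV_shift sgn 1 ((m2:ℝ)/2) ((s2:ℝ)/2) hm τ u v ((a2:ℂ)/2) ((b2:ℂ)/2)
      hcv hεR hεT hph
    rw [mul_one] at key
    rw [show (((((s2:ℝ)/2):ℝ)):ℂ) * ((b2:ℂ)/2 - (a2:ℂ)/2) = (s2:ℂ)/2 * ((b2:ℂ)/2 - (a2:ℂ)/2) by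
      push_cast; ring] at key
    exact key
  · -- case (c)
    intro hodd' a b
    have hodd : Odd m2 := Int.not_even_iff_odd.mp hodd'
    have hcv : (((b:ℂ) + 1/2)).im = 0 := by simp
    have hεR : ∀ k : ℤ, mexp (2*((((m2:ℝ)/2):ℝ):ℂ)*(k:ℂ)*((b:ℂ)+1/2)) = (-1:ℂ) ^ k := by
      intro k
      rw [show 2*((((m2:ℝ)/2):ℝ):ℂ)*(k:ℂ)*((b:ℂ)+1/2) = ((m2*(2*b+1)*k : ℤ):ℂ)/2 by
        push_cast; ring, mexp_int_div_two, zpow_mul,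
        Odd.neg_one_zpow (hodd.mul (odd_two_mul_add_one b))]
    have hεT : ∀ n : ℤ, mexp (((((m2:ℝ)/2):ℝ):ℂ)*(2*((a:ℂ)+1/2))*(n:ℂ)) = (-1:ℂ) ^ n := by
      intro n
      rw [show ((((m2:ℝ)/2):ℝ):ℂ)*(2*((a:ℂ)+1/2))*(n:ℂ) = ((m2*(2*a+1)*n : ℤ):ℂ)/2 by
        push_cast; ring, mexp_int_div_two, zpow_mul,
        Odd.neg_one_zpow (hodd.mul (odd_two_mul_add_one a))]
    have hph : ∀ i : ℕ, mexp (((((s2:ℝ)/2 + i) : ℝ):ℂ)*((b:ℂ)+1/2)) *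
        mexp (((-((s2:ℝ)/2 + i) : ℝ):ℂ)*(2*((a:ℂ)+1/2))/2)
        = mexp (((((s2:ℝ)/2):ℝ):ℂ)*(((b:ℂ)+1/2) - ((a:ℂ)+1/2))) := by
      intro i
      rw [← mexp_add']
      exact mexp_eq_of_sub_int ((i:ℤ)*(b-a)) (by push_cast; ring)
    have key := phiAddUV_shift sgn (-1) ((m2:ℝ)/2) ((s2:ℝ)/2) hm τ u v ((a:ℂ)+1/2) ((b:ℂ)+1/2)
      hcv hεR hεT hph
    rw [mul_neg_one] at key
    rw [show (((((s2:ℝ)/2):ℝ)):ℂ) * (((b:ℂ)+1/2) - ((a:ℂ)+1/2)) =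
        (s2:ℂ)/2 * (((b:ℂ)+1/2) - ((a:ℂ)+1/2)) by push_cast; ring] at key
    exact key
end
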